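/- If ε ~ N(0, σ²) and S clips to [L, U] with L ≤ θ ≤ U, then E|S(θ + ε) − θ| = (U − θ)(1 − F(U − θ)) + (θ − L)F(L − θ) + σ²(2f(0) − f(U − θ) − f(L − θ)), where F and f are the CDF and density of N(0, σ²). -/

import Mathlib

open MeasureTheory Real

theorem gaussian_clipped_abs_error (σ L U θ : ℝ) (hσ : 0 < σ)
    (hLθ : L ≤ θ) (hθU : θ ≤ U)
    (S : ℝ → ℝ) (hS : ∀ x, S x = max L (min U x))
    (f : ℝ → ℝ)
    (hf : ∀ x, f x = (1 / (σ * Real.sqrt (2 * Real.pi))) *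
      Real.exp (-(x ^ 2) / (2 * σ ^ 2)))
    (F : ℝ → ℝ) (hF : ∀ x, F x = ∫ t in Set.Iic x, f t) :
    ∫ x, |S (θ + x) - θ| * f x =
      (U - θ) * (1 - F (U - θ)) + (θ - L) * F (L - θ) +
        σ ^ 2 * (2 * f 0 - f (U - θ) - f (L - θ)) := by
  set a := L - θ with ha_def
  set b := U - θ with hb_def
  have ha : a ≤ 0 := by simp [ha_def]; linarith
  have hb : 0 ≤ b := by simp [hb_def]; linarith
  have hab : a ≤ b := ha.trans hb
  -- basic facts about f
  have hfeq : f = fun x => (1 / (σ * Real.sqrt (2 * Real.pi))) *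
      Real.exp (-(1 / (2 * σ ^ 2)) * x ^ 2) := by
    funext x; rw [hf]; congr 1; field_simp
  have hfc : Continuous f := by
    rw [hfeq]; fun_prop
  have hfnn : ∀ x, 0 ≤ f x := fun x => by rw [hf]; positivity
  have hint : Integrable f := by
    rw [hfeq]
    exact (integrable_exp_neg_mul_sq (by positivity)).const_mul _
  have htot : ∫ x, f x = 1 := by
    rw [hfeq, integral_const_mul, integral_gaussian]
    rw [show π / (1 / (2 * σ ^ 2)) = σ ^ 2 * (2 * π) by field_simp]
    rw [Real.sqrt_mul (by positivity : (0:ℝ) ≤ σ ^ 2) (2 * π), Real.sqrt_sq hσ.le]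
    rw [one_div, inv_mul_cancel₀ (by positivity)]
  -- antiderivative of x * f x
  have hderiv : ∀ x : ℝ, HasDerivAt (fun y => -σ ^ 2 * f y) (x * f x) x := by
    intro x
    have h1 : HasDerivAt (fun y : ℝ => -(y ^ 2) / (2 * σ ^ 2)) (-x / σ ^ 2) x := by
      have := ((hasDerivAt_pow 2 x).neg.div_const (2 * σ ^ 2))
      refine this.congr_deriv ?_
      field_simp; ring
    have heq : (fun y => -σ ^ 2 * f y) = fun y =>
        -σ ^ 2 * ((1 / (σ * Real.sqrt (2 * Real.pi))) * Real.exp (-(y ^ 2) / (2 * σ ^ 2))) := by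
      funext y; rw [hf]
    rw [heq]
    have h2 := ((h1.exp.const_mul (1 / (σ * Real.sqrt (2 * Real.pi)))).const_mul (-σ ^ 2))
    refine h2.congr_deriv ?_
    rw [hf]
    field_simp
  have hxfc : Continuous (fun x : ℝ => x * f x) := continuous_id.mul hfc
  have key : ∀ p q : ℝ, ∫ x in p..q, x * f x = σ ^ 2 * f p - σ ^ 2 * f q := by
    intro p q
    rw [intervalIntegral.integral_eq_sub_of_hasDerivAt (fun x _ => hderiv x)
      (hxfc.intervalIntegrable p q)]
    ring
  have hIoi : ∀ p, ∫ x in Set.Ioi p, f x = 1 - F p := by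
    intro p
    have h := intervalIntegral.integral_Iic_add_Ioi (hint.integrableOn) (hint.integrableOn)
      (f := f) (b := p) (μ := volume)
    rw [htot, ← hF p] at h
    linarith
  -- rewrite the integrand
  have hg : ∀ x, |S (θ + x) - θ| = |max a (min b x)| := by
    intro x
    rw [hS]
    congr 1
    rw [← max_sub_sub_right, ← min_sub_sub_right, add_sub_cancel_left]
  simp only [hg]
  set g := fun x => |max a (min b x)| * f x with hg_def
  -- integrability of g
  have hgc : Continuous g := by rw [hg_def]; fun_prop
  have hgi : Integrable g := by
    apply (hint.const_mul (max (-a) b)).mono' hgc.aestronglyMeasurable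
    filter_upwards with x
    have hm1 : a ≤ max a (min b x) := le_max_left _ _
    have hm2 : max a (min b x) ≤ b := max_le hab (min_le_left _ _)
    have habs : |max a (min b x)| ≤ max (-a) b :=
      abs_le.2 ⟨by have := le_max_left (-a) b; linarith, hm2.trans (le_max_right _ _)⟩
    have : ‖g x‖ = |max a (min b x)| * f x := by
      rw [hg_def]; simp [Real.norm_eq_abs, abs_mul, abs_of_nonneg (hfnn x)]
    rw [this]
    exact mul_le_mul_of_nonneg_right habs (hfnn x)
  -- split the integral
  have split1 : (∫ x in Set.Iic a, g x) + (∫ x in Set.Ioi a, g x) = ∫ x, g x :=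
    intervalIntegral.integral_Iic_add_Ioi hgi.integrableOn hgi.integrableOn
  have split2 : (∫ x in Set.Ioi a, g x) = (∫ x in Set.Ioc a b, g x) + ∫ x in Set.Ioi b, g x := by
    rw [← setIntegral_union (Set.Ioc_disjoint_Ioi le_rfl) measurableSet_Ioi
      hgi.integrableOn hgi.integrableOn, Set.Ioc_union_Ioi_eq_Ioi hab]
  have split3 : (∫ x in Set.Ioc a b, g x) = (∫ x in Set.Ioc a 0, g x) + ∫ x in Set.Ioc 0 b, g x := by
    rw [← setIntegral_union (Set.Ioc_disjoint_Ioc_of_le le_rfl) measurableSet_Ioc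
      hgi.integrableOn hgi.integrableOn, Set.Ioc_union_Ioc_eq_Ioc ha hb]
  -- evaluate the four pieces
  have p1 : (∫ x in Set.Iic a, g x) = -a * F a := by
    rw [setIntegral_congr_fun measurableSet_Iic (g := fun x => -a * f x) ?_, integral_const_mul, ← hF]
    intro x hx
    simp only [Set.mem_Iic] at hx
    rw [hg_def]
    simp only
    rw [min_eq_right (hx.trans (ha.trans hb)), max_eq_left hx, abs_of_nonpos ha]
  have p2 : (∫ x in Set.Ioi b, g x) = b * (1 - F b) := by
    rw [setIntegral_congr_fun measurableSet_Ioi (g := fun x => b * f x) ?_, integral_const_mul, hIoi]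
    intro x hx
    simp only [Set.mem_Ioi] at hx
    rw [hg_def]
    simp only
    rw [min_eq_left hx.le, max_eq_right hab, abs_of_nonneg hb]
  have p3 : (∫ x in Set.Ioc a 0, g x) = σ ^ 2 * f 0 - σ ^ 2 * f a := by
    rw [setIntegral_congr_fun measurableSet_Ioc (g := fun x => -(x * f x)) ?_]
    · rw [← intervalIntegral.integral_of_le ha, intervalIntegral.integral_neg, key]
      ring
    · intro x hx
      simp only [Set.mem_Ioc] at hx
      rw [hg_def]
      simp only
      rw [min_eq_right (hx.2.trans hb), max_eq_right hx.1.le, abs_of_nonpos hx.2]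
      ring
  have p4 : (∫ x in Set.Ioc 0 b, g x) = σ ^ 2 * f 0 - σ ^ 2 * f b := by
    rw [setIntegral_congr_fun measurableSet_Ioc (g := fun x => x * f x) ?_]
    · rw [← intervalIntegral.integral_of_le hb, key]
    · intro x hx
      simp only [Set.mem_Ioc] at hx
      rw [hg_def]
      simp only
      rw [min_eq_right hx.2, max_eq_right (ha.trans hx.1.le), abs_of_nonneg hx.1.le]
  have : ∫ x, g x = -a * F a + (σ ^ 2 * f 0 - σ ^ 2 * f a) + (σ ^ 2 * f 0 - σ ^ 2 * f b)
      + b * (1 - F b) := by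
    rw [← split1, split2, split3, p1, p2, p3, p4]; ring
  rw [this]
  ring
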